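/- Let f : X → X be measurable, μ an f-invariant ergodic Borel probability measure on X, and F : A → B an induced map, F(x) = f^{R(x)}(x) with measurable inducing time R : A → ℕ (R ≥ 1). Suppose ν is an F-invariant probability measure with ν ≪ μ, ν is ergodic for F, and ∫ R dν < +∞. If φ : X → ℝ is measurable and μ-integrable and φ̄ : A → ℝ is its F-lift, φ̄(x) = Σ_{j=0}^{R(x)−1} φ(f^j(x)), then ∫ φ dμ = (∫ φ̄ dν) / (∫ R dν). -/

import Mathlib

open MeasureTheory Set
open scoped ENNReal NNReal

theorem erg_unique13 {X : Type*} [MeasurableSpace X] {f : X → X}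
    {μ ρ : Measure X} [IsProbabilityMeasure μ] [IsProbabilityMeasure ρ]
    (herg : Ergodic f μ) (hρ : MeasurePreserving f ρ ρ) (hac : ρ ≪ μ) : ρ = μ := by
  set G : X → ℝ := fun x => (ρ.rnDeriv μ x).toReal with hGdef
  have hGm : Measurable G := (Measure.measurable_rnDeriv ρ μ).ennreal_toReal
  have hGnn : ∀ x, 0 ≤ G x := fun x => ENNReal.toReal_nonneg
  have hGint : Integrable G μ := Measure.integrable_toReal_rnDeriv
  have hset : ∀ S : Set X, ∫ x in S, G x ∂μ = (ρ S).toReal :=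
    fun S => Measure.setIntegral_toReal_rnDeriv hac S
  -- every level set has measure 0 or 1
  have hlevel : ∀ t : ℝ, μ {x | t < G x} = 0 ∨ μ {x | t < G x}ᶜ = 0 := by
    intro t
    set E : Set X := {x | t < G x} with hEdef
    have hEm : MeasurableSet E := measurableSet_lt measurable_const hGm
    have hρE : ρ (f ⁻¹' E) = ρ E := hρ.measure_preimage hEm.nullMeasurableSet
    have hμE : μ (f ⁻¹' E) = μ E :=
      herg.toMeasurePreserving.measure_preimage hEm.nullMeasurableSet
    have hpm : MeasurableSet (f ⁻¹' E) := herg.measurable hEm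
    set H : X → ℝ := fun x => max (G x - t) 0 with hHdef
    have hHm : Measurable H := (hGm.sub measurable_const).max measurable_const
    have hHnn : ∀ x, 0 ≤ H x := fun x => le_max_right _ _
    have hGt : Integrable (fun x => G x - t) μ := hGint.sub (integrable_const t)
    have hHint : Integrable H μ := hGt.pos_part
    have hKey : ∀ S : Set X, MeasurableSet S →
        ∫ x in S, (G x - t) ∂μ = (ρ S).toReal - t * (μ S).toReal := by
      intro S hS
      rw [integral_sub hGint.integrableOn (integrable_const t).integrableOn, hset S,
        setIntegral_const, smul_eq_mul, mul_comm]
      rfl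
    have hE1 : ∫ x in E, (G x - t) ∂μ = ∫ x, H x ∂μ := by
      rw [← integral_add_compl hEm hHint]
      have h1 : ∫ x in E, H x ∂μ = ∫ x in E, (G x - t) ∂μ := by
        refine setIntegral_congr_fun hEm fun x hx => ?_
        exact max_eq_left (sub_nonneg.2 (le_of_lt hx))
      have h2 : ∫ x in Eᶜ, H x ∂μ = 0 := by
        rw [show (0:ℝ) = ∫ x in Eᶜ, (0:ℝ) ∂μ by simp]
        refine setIntegral_congr_fun hEm.compl fun x hx => ?_
        exact max_eq_right (sub_nonpos.2 (not_lt.1 hx))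
      rw [h1, h2, add_zero]
    have hle1 : ∫ x in f ⁻¹' E, (G x - t) ∂μ ≤ ∫ x in f ⁻¹' E, H x ∂μ :=
      setIntegral_mono_on hGt.integrableOn hHint.integrableOn hpm
        fun x _ => le_max_left _ _
    have hle2 : ∫ x in f ⁻¹' E, H x ∂μ ≤ ∫ x, H x ∂μ :=
      setIntegral_le_integral hHint (Filter.Eventually.of_forall hHnn)
    have heq : ∫ x in f ⁻¹' E, H x ∂μ = ∫ x, H x ∂μ := by
      refine le_antisymm hle2 ?_
      calc ∫ x, H x ∂μ = ∫ x in E, (G x - t) ∂μ := hE1.symm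
        _ = ∫ x in f ⁻¹' E, (G x - t) ∂μ := by rw [hKey E hEm, hKey _ hpm, hρE, hμE]
        _ ≤ _ := hle1
    have hcompl0 : ∫ x in (f ⁻¹' E)ᶜ, H x ∂μ = 0 := by
      have := integral_add_compl hpm hHint
      linarith [this, heq]
    have hH0 : ∀ᵐ x ∂μ, x ∈ (f ⁻¹' E)ᶜ → H x = 0 := by
      have h := (integral_eq_zero_iff_of_nonneg_ae
        (Filter.Eventually.of_forall hHnn : (0:X→ℝ) ≤ᵐ[μ.restrict (f ⁻¹' E)ᶜ] H)
        hHint.integrableOn).1 hcompl0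
      exact (ae_restrict_iff' hpm.compl).1 h
    have hdiff1 : μ (E \ f ⁻¹' E) = 0 := by
      have : ∀ᵐ x ∂μ, x ∉ E \ f ⁻¹' E := by
        filter_upwards [hH0] with x hx
        intro hmem
        have h1 : H x = 0 := hx hmem.2
        have h2 : t < G x := hmem.1
        have : 0 < H x := lt_max_of_lt_left (sub_pos.2 h2)
        linarith
      have h := ae_iff.1 this
      convert h using 2
      ext x
      simp [E, Set.mem_diff, Set.mem_setOf_eq, not_not]
    have hdiff2 : μ (f ⁻¹' E \ E) = 0 := by
      have h1 : μ (f ⁻¹' E ∩ E) + μ (f ⁻¹' E \ E) = μ (f ⁻¹' E) :=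
        measure_inter_add_diff _ hEm
      have h2 : μ (E ∩ f ⁻¹' E) + μ (E \ f ⁻¹' E) = μ E :=
        measure_inter_add_diff _ hpm
      rw [hdiff1, add_zero] at h2
      rw [Set.inter_comm, h2, hμE] at h1
      have hfin : μ E ≠ ⊤ := measure_ne_top μ E
      have h3 : μ E + μ (f ⁻¹' E \ E) = μ E + 0 := by rw [add_zero]; exact h1
      exact (ENNReal.add_right_inj hfin).1 h3
    have haeeq : f ⁻¹' E =ᵐ[μ] E := ae_eq_set.2 ⟨hdiff2, hdiff1⟩
    rcases herg.quasiErgodic.ae_empty_or_univ₀ hEm.nullMeasurableSet haeeq with h | h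
    · exact Or.inl (ae_eq_empty.1 h)
    · exact Or.inr (ae_eq_univ.1 h)
  -- G is a.e. constant
  set Tr : Set ℝ := {t | μ {x | t < G x} = 0} with hTrdef
  have hne : Tr.Nonempty := by
    by_contra h
    rw [Set.not_nonempty_iff_eq_empty] at h
    have hall : ∀ n : ℕ, ∀ᵐ x ∂μ, (n : ℝ) < G x := by
      intro n
      rcases hlevel n with h0 | h1
      · have hmem : (n : ℝ) ∈ Tr := h0
        rw [h] at hmem
        exact hmem.elim
      · rw [ae_iff]
        exact h1
    have hfa : ∀ᵐ x ∂μ, ∀ n : ℕ, (n : ℝ) < G x := ae_all_iff.2 hall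
    have hnb : (ae μ).NeBot := IsProbabilityMeasure.ae_neBot
    obtain ⟨x, hx⟩ := hfa.exists
    obtain ⟨n, hn⟩ := exists_nat_gt (G x)
    exact absurd (hx n) (not_lt.2 hn.le)
  have hbdd : BddBelow Tr := by
    refine ⟨-1, fun t ht => ?_⟩
    by_contra hlt
    push_neg at hlt
    have huniv : {x | t < G x} = Set.univ :=
      Set.eq_univ_of_forall fun x => lt_of_lt_of_le (by linarith [hGnn x]) (hGnn x)
    have : μ {x | t < G x} = 0 := ht
    rw [huniv] at this
    simp at this
  set c : ℝ := sInf Tr with hcdef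
  have hub : ∀ᵐ x ∂μ, G x ≤ c := by
    have h1 : ∀ n : ℕ, ∀ᵐ x ∂μ, G x < c + 1 / (n + 1) := by
      intro n
      have hpos : (0:ℝ) < 1 / (n + 1) := by positivity
      obtain ⟨t, htTr, htlt⟩ := exists_lt_of_csInf_lt hne (lt_add_of_pos_right c hpos)
      have h0 : ∀ᵐ x ∂μ, ¬ t < G x := by
        rw [ae_iff]
        simp only [not_not]; exact htTr
      filter_upwards [h0] with x hx
      exact lt_of_le_of_lt (not_lt.1 hx) htlt
    filter_upwards [ae_all_iff.2 h1] with x hx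
    by_contra hgt
    push_neg at hgt
    obtain ⟨n, hn⟩ := exists_nat_one_div_lt (sub_pos.2 hgt)
    exact absurd (hx n) (not_lt.2 (by linarith))
  have hlb : ∀ᵐ x ∂μ, c ≤ G x := by
    have h1 : ∀ n : ℕ, ∀ᵐ x ∂μ, c - 1 / (n + 1) < G x := by
      intro n
      have hpos : (0:ℝ) < 1 / (n + 1) := by positivity
      have htn : (c - 1 / (n + 1)) ∉ Tr := fun hmem =>
        absurd (csInf_le hbdd hmem) (not_le.2 (by linarith))
      have h1' := (hlevel (c - 1 / (n + 1))).resolve_left htn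
      rw [ae_iff]
      exact h1'
    filter_upwards [ae_all_iff.2 h1] with x hx
    by_contra hgt
    push_neg at hgt
    obtain ⟨n, hn⟩ := exists_nat_one_div_lt (sub_pos.2 hgt)
    exact absurd (hx n) (not_lt.2 (by linarith))
  have hconst : G =ᵐ[μ] fun _ => c := by
    filter_upwards [hub, hlb] with x h1 h2
    exact le_antisymm h1 h2
  have hc1 : c = 1 := by
    have h1 : ∫ x, G x ∂μ = (ρ Set.univ).toReal := by
      rw [← setIntegral_univ]; exact hset Set.univ
    have h2 : ∫ x, G x ∂μ = c := by
      rw [integral_congr_ae hconst, integral_const]; simp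
    rw [measure_univ] at h1
    simp at h1
    linarith
  refine Measure.ext fun S hS => ?_
  have h1 := hset S
  have h2 : ∫ x in S, G x ∂μ = ∫ x in S, (1:ℝ) ∂μ :=
    integral_congr_ae (ae_restrict_of_ae (hconst.mono fun x hx => by rw [hx, hc1]))
  rw [h2, setIntegral_const, smul_eq_mul, mul_one] at h1
  exact (ENNReal.toReal_eq_toReal_iff' (measure_ne_top ρ S) (measure_ne_top μ S)).1 h1.symm

set_option maxHeartbeats 1000000 in
theorem stmt13 {X : Type*} [MeasurableSpace X]
    (f : X → X) (hfm : Measurable f)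
    (μ : Measure X) [IsProbabilityMeasure μ]
    (hfμ : MeasurePreserving f μ μ) (herg : Ergodic f μ)
    (A B : Set X) (hA : MeasurableSet A) (hB : MeasurableSet B)
    (R : X → ℕ) (hRm : Measurable R) (hR1 : ∀ x ∈ A, 1 ≤ R x)
    (hmaps : Set.MapsTo (fun x => f^[R x] x) A B)
    (ν : Measure X) [IsProbabilityMeasure ν]
    (hνA : ν Aᶜ = 0) (hac : ν ≪ μ)
    (hFinv : MeasurePreserving (fun x => f^[R x] x) ν ν)
    (hFerg : Ergodic (fun x => f^[R x] x) ν)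
    (hRint : Integrable (fun x => (R x : ℝ)) ν)
    (φ : X → ℝ) (hφm : Measurable φ) (hφint : Integrable φ μ) :
    ∫ x, φ x ∂μ =
      (∫ x, (∑ j ∈ Finset.range (R x), φ (f^[j] x)) ∂ν) / (∫ x, (R x : ℝ) ∂ν) := by
  classical
  have hUm : ∀ j : ℕ, MeasurableSet {x | j < R x} := fun j =>
    measurableSet_lt measurable_const hRm
  set m : Measure X := Measure.sum (fun j => (ν.restrict {x | j < R x}).map f^[j]) with hmdef
  have hm_apply : ∀ S : Set X, MeasurableSet S →
      m S = ∑' j : ℕ, ν ({x | j < R x} ∩ f^[j] ⁻¹' S) := by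
    intro S hS
    rw [hmdef, Measure.sum_apply _ hS]
    congr 1
    ext j
    rw [Measure.map_apply (hfm.iterate j) hS,
      Measure.restrict_apply ((hfm.iterate j) hS), Set.inter_comm]
  have hν0 : ν {x | 0 < R x}ᶜ = 0 := by
    refine measure_mono_null ?_ hνA
    intro x hx
    intro hxA
    exact hx (lt_of_lt_of_le Nat.zero_lt_one (hR1 x hxA))
  have hconull : ∀ T : Set X, ν ({x | 0 < R x} ∩ T) = ν T := by
    intro T
    have h := measure_inter_add_diff (μ := ν) T (hUm 0)
    have hz : ν (T \ {x | 0 < R x}) = 0 :=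
      measure_mono_null (Set.diff_subset_compl _ _) hν0
    rw [hz, add_zero] at h
    rw [Set.inter_comm]
    exact h
  -- invariance of m
  have hminv : ∀ S : Set X, MeasurableSet S → m (f ⁻¹' S) = m S := by
    intro S hS
    have hiter : ∀ j : ℕ, f^[j] ⁻¹' (f ⁻¹' S) = f^[j+1] ⁻¹' S := by
      intro j
      rw [Function.iterate_succ', Set.preimage_comp]
    have hsplit : ∀ (j : ℕ) (T : Set X), MeasurableSet T →
        ν ({x | j < R x} ∩ T) = ν ({x | j+1 < R x} ∩ T) + ν ({x | R x = j+1} ∩ T) := by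
      intro j T hT
      have hd : Disjoint ({x | j+1 < R x} ∩ T) ({x | R x = j+1} ∩ T) :=
        Set.disjoint_left.2 fun x hx1 hx2 => by
          have := hx1.1; have := hx2.1; simp only [Set.mem_setOf_eq] at *; omega
      have hu : {x | j < R x} ∩ T = ({x | j+1 < R x} ∩ T) ∪ ({x | R x = j+1} ∩ T) := by
        ext x
        simp only [Set.mem_inter_iff, Set.mem_union, Set.mem_setOf_eq]
        constructor
        · rintro ⟨h1, h2⟩
          rcases Nat.lt_or_ge (j+1) (R x) with h | h
          · exact Or.inl ⟨h, h2⟩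
          · exact Or.inr ⟨by omega, h2⟩
        · rintro (⟨h1, h2⟩ | ⟨h1, h2⟩) <;> exact ⟨by omega, h2⟩
      have hRj1 : MeasurableSet {x | R x = j+1} := hRm (measurableSet_singleton (j+1))
      rw [hu, measure_union hd (hRj1.inter hT)]
    have hmeasF : Measurable (fun x => f^[R x] x) := hFinv.measurable
    have hFS : MeasurableSet ((fun x => f^[R x] x) ⁻¹' S) := hmeasF hS
    have hsetFj : ∀ j : ℕ,
        {x | R x = j+1} ∩ f^[j+1] ⁻¹' S = {x | R x = j+1} ∩ (fun x => f^[R x] x) ⁻¹' S := by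
      intro j
      ext x
      simp only [Set.mem_inter_iff, Set.mem_setOf_eq, Set.mem_preimage]
      constructor
      · rintro ⟨h1, h2⟩
        refine ⟨h1, ?_⟩
        show f^[R x] x ∈ S
        rw [h1]; exact h2
      · rintro ⟨h1, h2⟩
        refine ⟨h1, ?_⟩
        have : f^[R x] x ∈ S := h2
        rwa [h1] at this
    set g : ℕ → Set X := fun j => {x | R x = j+1} ∩ (fun x => f^[R x] x) ⁻¹' S with hgdef
    have hgm : ∀ j, MeasurableSet (g j) := fun j =>
      (hRm (measurableSet_singleton (j+1))).inter hFS
    have hgd : Pairwise (Function.onFun Disjoint g) := by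
      intro i j hij
      refine Set.disjoint_left.2 fun x hx1 hx2 => hij ?_
      have h1 := hx1.1
      have h2 := hx2.1
      simp only [Set.mem_setOf_eq] at h1 h2
      omega
    have hgU : (⋃ j : ℕ, g j) = {x | 0 < R x} ∩ (fun x => f^[R x] x) ⁻¹' S := by
      ext x
      simp only [hgdef, Set.mem_iUnion, Set.mem_inter_iff, Set.mem_setOf_eq]
      constructor
      · rintro ⟨j, h1, h2⟩
        exact ⟨by omega, h2⟩
      · rintro ⟨h1, h2⟩
        exact ⟨R x - 1, by omega, h2⟩
    have hsecond : (∑' j : ℕ, ν ({x | R x = j+1} ∩ f^[j+1] ⁻¹' S)) = ν S := by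
      have h1 : (∑' j : ℕ, ν ({x | R x = j+1} ∩ f^[j+1] ⁻¹' S)) = ∑' j : ℕ, ν (g j) := by
        congr 1
        ext j
        rw [hgdef]
        congr 1
        exact hsetFj j
      have h2 : ν (⋃ j : ℕ, g j) = ∑' j : ℕ, ν (g j) := measure_iUnion hgd hgm
      rw [h1, ← h2, hgU, hconull, hFinv.measure_preimage hS.nullMeasurableSet]
    have hmS : m S = ν S + ∑' j : ℕ, ν ({x | j+1 < R x} ∩ f^[j+1] ⁻¹' S) := by
      rw [hm_apply S hS, tsum_eq_zero_add' ENNReal.summable]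
      congr 1
      rw [Function.iterate_zero, Set.preimage_id]
      exact hconull S
    calc m (f ⁻¹' S) = ∑' j : ℕ, ν ({x | j < R x} ∩ f^[j+1] ⁻¹' S) := by
          rw [hm_apply _ (hfm hS)]
          congr 1; ext j; rw [hiter j]
      _ = ∑' j : ℕ, (ν ({x | j+1 < R x} ∩ f^[j+1] ⁻¹' S)
            + ν ({x | R x = j+1} ∩ f^[j+1] ⁻¹' S)) := by
          congr 1; ext j; exact hsplit j _ ((hfm.iterate (j+1)) hS)
      _ = (∑' j : ℕ, ν ({x | j+1 < R x} ∩ f^[j+1] ⁻¹' S))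
            + ∑' j : ℕ, ν ({x | R x = j+1} ∩ f^[j+1] ⁻¹' S) := ENNReal.tsum_add
      _ = m S := by rw [hsecond, hmS, add_comm]
  have hmap : MeasurePreserving f m m :=
    ⟨hfm, Measure.ext fun S hS => by rw [Measure.map_apply hfm hS, hminv S hS]⟩
  have hRlint : ∫⁻ x, (R x : ℝ≥0∞) ∂ν = ∑' j : ℕ, ν {x | j < R x} := by
    have hpt : ∀ x, (R x : ℝ≥0∞)
        = ∑' j : ℕ, Set.indicator {x' | j < R x'} (1 : X → ℝ≥0∞) x := by
      intro x
      have h0 : ∀ j ∉ Finset.range (R x),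
          Set.indicator {x' | j < R x'} (1 : X → ℝ≥0∞) x = 0 := fun j hj =>
        Set.indicator_of_notMem (s := {x' : X | j < R x'}) (a := x)
          (fun h => hj (Finset.mem_range.2 h)) _
      rw [tsum_eq_sum h0,
        Finset.sum_congr rfl fun j hj => Set.indicator_of_mem
          (s := {x' : X | j < R x'}) (a := x) (Finset.mem_range.1 hj) _]
      simp
    rw [lintegral_congr hpt,
      lintegral_tsum fun j => (measurable_one.indicator (hUm j)).aemeasurable]
    congr 1
    ext j
    rw [lintegral_indicator (hUm j)]
    simp
  have hm_univ : m Set.univ = ∑' j : ℕ, ν {x | j < R x} := by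
    rw [hm_apply Set.univ MeasurableSet.univ]
    simp
  set c : ℝ≥0∞ := m Set.univ with hcdef
  have hc_top : c ≠ ∞ := by
    rw [hm_univ, ← hRlint]
    have heq : ∫⁻ x, (R x : ℝ≥0∞) ∂ν = ∫⁻ x, (‖(R x : ℝ)‖₊ : ℝ≥0∞) ∂ν :=
      lintegral_congr fun x => by simp
    rw [heq]
    exact hRint.2.ne
  have hν1 : ν {x | 0 < R x} = 1 := by
    have := hconull Set.univ
    simpa using this
  have hc_one : (1:ℝ≥0∞) ≤ c := by
    rw [hm_univ, ← hν1]
    exact ENNReal.le_tsum 0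
  have hc0 : c ≠ 0 := fun h => by simp [h] at hc_one
  have hmac : m ≪ μ := by
    refine Measure.AbsolutelyContinuous.mk fun S hS h0 => ?_
    rw [hm_apply S hS]
    have hz : ∀ j : ℕ, ν ({x | j < R x} ∩ f^[j] ⁻¹' S) = 0 := by
      intro j
      refine measure_mono_null Set.inter_subset_right (hac ?_)
      rw [(hfμ.iterate j).measure_preimage hS.nullMeasurableSet]
      exact h0
    simp [hz]
  set ρ : Measure X := c⁻¹ • m with hρdef
  have hρuniv : ρ Set.univ = 1 := by
    rw [hρdef, Measure.smul_apply, smul_eq_mul, ← hcdef, ENNReal.inv_mul_cancel hc0 hc_top]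
  haveI : IsProbabilityMeasure ρ := ⟨hρuniv⟩
  have hρinv : MeasurePreserving f ρ ρ := by
    refine ⟨hfm, ?_⟩
    rw [hρdef, Measure.map_smul, hmap.map_eq]
  have hρac : ρ ≪ μ := Measure.smul_absolutelyContinuous.trans hmac
  have hρeq : ρ = μ := erg_unique13 herg hρinv hρac
  have hmμ : m = c • μ := by
    rw [← hρeq, hρdef, smul_smul, ENNReal.mul_inv_cancel hc0 hc_top, one_smul]
  have hφintm : Integrable φ m := by
    rw [hmμ]
    exact hφint.smul_measure hc_top
  have hInt1 : ∫ x, φ x ∂m = c.toReal * ∫ x, φ x ∂μ := by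
    rw [hmμ, integral_smul_measure, smul_eq_mul]
  set ψ : ℕ → X → ℝ := fun j => Set.indicator {x | j < R x} (fun x => φ (f^[j] x)) with hψdef
  have hψm : ∀ j, AEStronglyMeasurable (ψ j) ν := fun j =>
    ((hφm.comp (hfm.iterate j)).indicator (hUm j)).aestronglyMeasurable
  have hlnorm : ∑' j : ℕ, ∫⁻ x, ‖ψ j x‖₊ ∂ν = ∫⁻ x, ‖φ x‖₊ ∂m := by
    rw [hmdef, lintegral_sum_measure]
    congr 1
    ext j
    rw [lintegral_map hφm.nnnorm.coe_nnreal_ennreal (hfm.iterate j), ← lintegral_indicator (hUm j)]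
    refine lintegral_congr fun x => ?_
    by_cases hx : x ∈ {x | j < R x}
    · simp [hψdef, Set.indicator_of_mem hx]
    · simp [hψdef, Set.indicator_of_notMem hx]
  have hfin' : (∑' j : ℕ, ∫⁻ x, ‖ψ j x‖₊ ∂ν) ≠ ∞ := by
    rw [hlnorm, hmμ, lintegral_smul_measure]
    exact ENNReal.mul_ne_top hc_top hφint.2.ne
  have hswap : ∫ x, (∑' j, ψ j x) ∂ν = ∑' j, ∫ x, ψ j x ∂ν := integral_tsum hψm hfin'
  have hpt2 : ∀ x, (∑' j, ψ j x) = ∑ j ∈ Finset.range (R x), φ (f^[j] x) := by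
    intro x
    have h0 : ∀ j ∉ Finset.range (R x), ψ j x = 0 := fun j hj =>
      Set.indicator_of_notMem (s := {x' : X | j < R x'}) (a := x)
        (fun h => hj (Finset.mem_range.2 h)) _
    rw [tsum_eq_sum h0]
    exact Finset.sum_congr rfl fun j hj => Set.indicator_of_mem
      (s := {x' : X | j < R x'}) (a := x) (Finset.mem_range.1 hj) _
  have hInt2 : ∫ x, φ x ∂m = ∑' j, ∫ x, ψ j x ∂ν := by
    rw [hmdef] at hφintm
    rw [hmdef, integral_sum_measure hφintm]
    congr 1
    ext j
    rw [integral_map (hfm.iterate j).aemeasurable hφm.aestronglyMeasurable,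
      ← integral_indicator (hUm j)]
  have hnum : ∫ x, (∑ j ∈ Finset.range (R x), φ (f^[j] x)) ∂ν = c.toReal * ∫ x, φ x ∂μ := by
    have h1 : ∫ x, (∑ j ∈ Finset.range (R x), φ (f^[j] x)) ∂ν = ∫ x, (∑' j, ψ j x) ∂ν :=
      integral_congr_ae (Filter.Eventually.of_forall fun x => (hpt2 x).symm)
    rw [h1, hswap, ← hInt2, hInt1]
  have hden : ∫ x, (R x : ℝ) ∂ν = c.toReal := by
    rw [integral_eq_lintegral_of_nonneg_ae
      (Filter.Eventually.of_forall fun x => Nat.cast_nonneg (R x)) hRint.1]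
    congr 1
    calc ∫⁻ x, ENNReal.ofReal ((R x : ℝ)) ∂ν = ∫⁻ x, (R x : ℝ≥0∞) ∂ν :=
          lintegral_congr fun x => ENNReal.ofReal_natCast _
      _ = ∑' j, ν {x | j < R x} := hRlint
      _ = c := hm_univ.symm
  have hcpos : 0 < c.toReal := ENNReal.toReal_pos hc0 hc_top
  rw [hnum, hden, mul_comm, mul_div_assoc, div_self hcpos.ne', mul_one]
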